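/- arXiv:1303.2929 — 3 statements merged into one kernel-verified Lean document; each statement's English description precedes it below -/
import Mathlib

section
/- For all integers c ≥ 0, d ≥ 0, and a ≥ 0, the following identity of polynomials in ℤ[q] holds: ∑_{i+j=a, i,j≥0} q^{(c+2)·j}·[c+i choose i]_q·[d+j choose j]_q = [c+d+a+2 choose a]_q − q^{c+1}·[c+d+a+1 choose a−1]_q (where the last Gaussian binomial is interpreted as 0 when a = 0). -/
open Polynomial Finset

private noncomputable def Bq : ℕ → ℕ → Polynomial ℤ
  | _, 0 => 1
  | 0, _+1 => 0
  | m+1, j+1 => Bq m (j+1) + X^(m-j) * Bq m j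
termination_by structural m => m

private lemma Bq_zero (m : ℕ) : Bq m 0 = 1 := by cases m <;> rfl

private lemma Bq_succ (m j : ℕ) :
    Bq (m+1) (j+1) = Bq m (j+1) + X^(m-j) * Bq m j := rfl

private lemma Bq_lt : ∀ m j, m < j → Bq m j = 0 := by
  intro m
  induction m with
  | zero => intro j hj; match j, hj with | j+1, _ => rfl
  | succ m ih =>
    intro j hj
    match j, hj with
    | j+1, hj =>
      rw [Bq_succ, ih (j+1) (by omega), ih j (by omega)]
      ring

private lemma Bq_self : ∀ m, Bq m m = 1 := by
  intro m
  induction m with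
  | zero => rfl
  | succ m ih =>
    rw [Bq_succ, Bq_lt m (m+1) (by omega), Nat.sub_self, ih]
    ring

private lemma Bq_pascal (m j : ℕ) :
    Bq (m+1+j) (j+1) = Bq (m+j) (j+1) + X^m * Bq (m+j) j := by
  have h : m + 1 + j = (m + j) + 1 := by ring
  rw [h, Bq_succ, Nat.add_sub_cancel]

private lemma Bq_prod : ∀ j m : ℕ,
    Bq (m+j) j * ∏ i ∈ range j, (1 - (X : Polynomial ℤ)^(i+1))
      = ∏ i ∈ range j, (1 - (X : Polynomial ℤ)^(m+1+i)) := by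
  intro j
  induction j with
  | zero => intro m; simp [Bq_zero]
  | succ j ihj =>
    intro m
    induction m with
    | zero =>
      have h1 : Bq (0+(j+1)) (j+1) = 1 := by rw [Nat.zero_add, Bq_self]
      rw [h1, one_mul]
      exact Finset.prod_congr rfl fun i _ => by
        rw [show (0:ℕ)+1+i = i+1 from by omega]
    | succ m ihm =>
      have hp : Bq (m+1+(j+1)) (j+1)
          = Bq (m+(j+1)) (j+1) + X^(m+1) * Bq ((m+1)+j) j := by
        have h := Bq_pascal (m+1) j
        rw [show m+1+(j+1) = m+1+1+j from by ring,
            show m+(j+1) = m+1+j from by ring]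
        exact h
      have hj' := ihj (m+1)
      have hfull1 : ∏ i ∈ range (j+1), (1 - (X : Polynomial ℤ)^(i+1))
          = (∏ i ∈ range j, (1 - (X : Polynomial ℤ)^(i+1))) * (1 - X^(j+1)) :=
        prod_range_succ _ j
      have hm1 : ∏ i ∈ range (j+1), (1 - (X : Polynomial ℤ)^(m+1+i))
          = (1 - X^(m+1)) * ∏ i ∈ range j, (1 - (X : Polynomial ℤ)^(m+1+1+i)) := by
        rw [prod_range_succ' (fun i => (1 - (X : Polynomial ℤ)^(m+1+i))) j]
        rw [show m+1+0 = m+1 from rfl, mul_comm]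
        congr 1
        exact Finset.prod_congr rfl fun i _ => by
          rw [show m+1+(i+1) = m+1+1+i from by ring]
      have hm2 : ∏ i ∈ range (j+1), (1 - (X : Polynomial ℤ)^(m+1+1+i))
          = (∏ i ∈ range j, (1 - (X : Polynomial ℤ)^(m+1+1+i)))
            * (1 - X^(m+1+1+j)) := prod_range_succ _ j
      rw [hp]
      linear_combination ihm + X^(m+1)*(1-X^(j+1))*hj'
        + X^(m+1)*(Bq (m+1+j) j)*hfull1 + hm1 - hm2

private lemma prod_Icc_one (j : ℕ) (f : ℕ → Polynomial ℤ) :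
    ∏ i ∈ Icc 1 j, f i = ∏ i ∈ range j, f (i+1) := by
  induction j with
  | zero => simp
  | succ j ih =>
    rw [Finset.prod_Icc_succ_top (by omega), ih, prod_range_succ]

private lemma P_ne_zero (j : ℕ) :
    (∏ i ∈ range j, (1 - (X : Polynomial ℤ)^(i+1))) ≠ 0 := by
  apply Finset.prod_ne_zero_iff.mpr
  intro i _
  intro h
  have := congrArg (fun p => Polynomial.coeff p 0) h
  simp [Polynomial.coeff_X_pow] at this

private lemma Bq_pascal2 (d j : ℕ) :
    Bq (d+j+2) (j+1) = X^(j+1) * Bq (d+j+1) (j+1) + Bq (d+j+1) j := by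
  apply mul_right_cancel₀ (P_ne_zero (j+1))
  have A1 : Bq (d+j+2) (j+1) * ∏ i ∈ range (j+1), (1 - (X : Polynomial ℤ)^(i+1))
      = ∏ i ∈ range (j+1), (1 - (X : Polynomial ℤ)^(d+1+1+i)) := by
    have h := Bq_prod (j+1) (d+1)
    rwa [show d+1+(j+1) = d+j+2 from by ring] at h
  have A2 : Bq (d+j+1) (j+1) * ∏ i ∈ range (j+1), (1 - (X : Polynomial ℤ)^(i+1))
      = ∏ i ∈ range (j+1), (1 - (X : Polynomial ℤ)^(d+1+i)) := by
    have h := Bq_prod (j+1) d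
    rwa [show d+(j+1) = d+j+1 from by ring] at h
  have A3 : Bq (d+j+1) j * ∏ i ∈ range j, (1 - (X : Polynomial ℤ)^(i+1))
      = ∏ i ∈ range j, (1 - (X : Polynomial ℤ)^(d+1+1+i)) := by
    have h := Bq_prod j (d+1)
    rwa [show d+1+j = d+j+1 from by ring] at h
  have hfull1 : ∏ i ∈ range (j+1), (1 - (X : Polynomial ℤ)^(i+1))
      = (∏ i ∈ range j, (1 - (X : Polynomial ℤ)^(i+1))) * (1 - X^(j+1)) :=
    prod_range_succ _ j
  have hm1 : ∏ i ∈ range (j+1), (1 - (X : Polynomial ℤ)^(d+1+i))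
      = (1 - X^(d+1)) * ∏ i ∈ range j, (1 - (X : Polynomial ℤ)^(d+1+1+i)) := by
    rw [prod_range_succ' (fun i => (1 - (X : Polynomial ℤ)^(d+1+i))) j]
    rw [show d+1+0 = d+1 from rfl, mul_comm]
    congr 1
    exact Finset.prod_congr rfl fun i _ => by
      rw [show d+1+(i+1) = d+1+1+i from by ring]
  have hm2 : ∏ i ∈ range (j+1), (1 - (X : Polynomial ℤ)^(d+1+1+i))
      = (∏ i ∈ range j, (1 - (X : Polynomial ℤ)^(d+1+1+i)))
        * (1 - X^(d+1+1+j)) := prod_range_succ _ j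
  linear_combination A1 - X^(j+1)*A2 - (1-X^(j+1))*A3
    - Bq (d+j+1) j * hfull1 + hm2 - X^(j+1)*hm1

private lemma Vlem (c : ℕ) : ∀ d a : ℕ,
    ∑ p ∈ antidiagonal a,
        X^((c+1)*p.2) * Bq (c+p.1) p.1 * Bq (d+p.2) p.2
      = Bq (c+d+a+1) a := by
  intro d
  induction d with
  | zero =>
    intro a
    induction a with
    | zero => simp [Bq_zero]
    | succ a iha =>
      rw [Finset.Nat.sum_antidiagonal_succ']
      have step : ∀ p : ℕ × ℕ, p ∈ antidiagonal a →
          X^((c+1)*((p.1, p.2+1) : ℕ × ℕ).2) * Bq (c+((p.1, p.2+1) : ℕ × ℕ).1)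
              ((p.1, p.2+1) : ℕ × ℕ).1 * Bq (0+((p.1, p.2+1) : ℕ × ℕ).2)
              ((p.1, p.2+1) : ℕ × ℕ).2
            = X^(c+1) * (X^((c+1)*p.2) * Bq (c+p.1) p.1 * Bq (0+p.2) p.2) := by
        intro p _
        have hb : ∀ k, Bq (0+k) k = 1 := fun k => by rw [Nat.zero_add, Bq_self]
        show X^((c+1)*(p.2+1)) * Bq (c+p.1) p.1 * Bq (0+(p.2+1)) (p.2+1) = _
        rw [hb (p.2+1), hb p.2, Nat.mul_add, Nat.mul_one, pow_add]
        ring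
      rw [Finset.sum_congr rfl step, ← Finset.mul_sum, iha]
      have hP := Bq_pascal (c+1) a
      rw [show c+1+1+a = c+0+(a+1)+1 from by ring] at hP
      show X ^ ((c + 1) * 0) * Bq (c + (a + 1)) (a + 1) * Bq (0 + 0) 0
          + X ^ (c + 1) * Bq (c + 0 + a + 1) a = Bq (c + 0 + (a + 1) + 1) (a + 1)
      simp only [Nat.mul_zero, pow_zero, Bq_zero, one_mul, mul_one]
      rw [show c+(a+1) = c+1+a from by ring, show c+0+a+1 = c+1+a from by ring]
      linear_combination -hP
  | succ d ihd =>
    intro a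
    induction a with
    | zero => simp [Bq_zero]
    | succ a iha =>
      rw [Finset.Nat.sum_antidiagonal_succ']
      have step : ∀ p : ℕ × ℕ, p ∈ antidiagonal a →
          X^((c+1)*((p.1, p.2+1) : ℕ × ℕ).2) * Bq (c+((p.1, p.2+1) : ℕ × ℕ).1)
              ((p.1, p.2+1) : ℕ × ℕ).1 * Bq ((d+1)+((p.1, p.2+1) : ℕ × ℕ).2)
              ((p.1, p.2+1) : ℕ × ℕ).2
            = X^((c+1)*(p.2+1)) * Bq (c+p.1) p.1 * Bq (d+(p.2+1)) (p.2+1)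
              + X^(d+1) * X^(c+1) *
                (X^((c+1)*p.2) * Bq (c+p.1) p.1 * Bq ((d+1)+p.2) p.2) := by
        intro p _
        show X^((c+1)*(p.2+1)) * Bq (c+p.1) p.1 * Bq ((d+1)+(p.2+1)) (p.2+1) = _
        have hp : Bq ((d+1)+(p.2+1)) (p.2+1)
            = Bq (d+(p.2+1)) (p.2+1) + X^(d+1) * Bq ((d+1)+p.2) p.2 := by
          have h := Bq_pascal (d+1) p.2
          rw [show (d+1)+(p.2+1) = d+1+1+p.2 from by ring,
              show d+(p.2+1) = d+1+p.2 from by ring,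
              show (d+1)+p.2 = d+1+p.2 from by ring]
          exact h
        rw [hp, show (c+1)*(p.2+1) = (c+1)*p.2 + (c+1) from by ring, pow_add]
        ring
      rw [Finset.sum_congr rfl step, Finset.sum_add_distrib, ← Finset.mul_sum, iha]
      have hsd := ihd (a+1)
      rw [Finset.Nat.sum_antidiagonal_succ'] at hsd
      have hsd' : X ^ ((c + 1) * 0) * Bq (c + (a + 1)) (a + 1) * Bq (d + 0) 0
          + ∑ p ∈ antidiagonal a,
              X^((c+1)*(p.2+1)) * Bq (c+p.1) p.1 * Bq (d+(p.2+1)) (p.2+1)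
          = Bq (c + d + (a+1) + 1) (a+1) := hsd
      show X ^ ((c + 1) * 0) * Bq (c + (a + 1)) (a + 1) * Bq ((d+1) + 0) 0
          + (∑ p ∈ antidiagonal a,
              X^((c+1)*(p.2+1)) * Bq (c+p.1) p.1 * Bq (d+(p.2+1)) (p.2+1)
            + X^(d+1) * X^(c+1) * Bq (c + (d+1) + a + 1) a)
          = Bq (c + (d+1) + (a+1) + 1) (a+1)
      simp only [Nat.mul_zero, pow_zero, Bq_zero, one_mul, mul_one] at hsd' ⊢
      have hP := Bq_pascal (c+d+2) a
      rw [show c+d+2+1+a = c+(d+1)+(a+1)+1 from by ring,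
          show c+d+2+a = c+d+(a+1)+1 from by ring] at hP
      rw [show c+(d+1)+a+1 = c+d+(a+1)+1 from by ring]
      linear_combination hsd' - hP

private lemma gb_eq_Bq (gb : ℕ → ℕ → Polynomial ℤ)
    (hgb : ∀ m j : ℕ, j ≤ m →
      gb m j * ∏ i ∈ Finset.Icc 1 j, (1 - (X : Polynomial ℤ) ^ i)
        = ∏ i ∈ Finset.Icc 1 j, (1 - (X : Polynomial ℤ) ^ (m - j + i)))
    (hgb0 : ∀ m j : ℕ, m < j → gb m j = 0) (m j : ℕ) : gb m j = Bq m j := by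
  rcases le_or_gt j m with h | h
  · apply mul_right_cancel₀ (P_ne_zero j)
    have h1 := hgb m j h
    rw [prod_Icc_one, prod_Icc_one] at h1
    have h2 := Bq_prod j (m - j)
    rw [show m - j + j = m from by omega] at h2
    rw [h1, h2]
    exact Finset.prod_congr rfl fun i _ => by
      rw [show m - j + (i+1) = m - j + 1 + i from by omega]
  · rw [hgb0 m j h, Bq_lt m j h]

/-- The `n = 2` case of the generalized q-Vandermonde-type identity:
`∑_{i+j=a} q^{(c+2)j} · [c+i choose i]_q · [d+j choose j]_q
  = [c+d+a+2 choose a]_q − q^{c+1} · [c+d+a+1 choose a−1]_q`,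
where the last Gaussian binomial is interpreted as `0` when `a = 0`, and
`gb` is the Gaussian binomial coefficient characterized by the product formula. -/
theorem gaussBinomial_vandermonde_type_shifted
    (gb : ℕ → ℕ → Polynomial ℤ)
    (hgb : ∀ m j : ℕ, j ≤ m →
      gb m j * ∏ i ∈ Finset.Icc 1 j, (1 - (X : Polynomial ℤ) ^ i)
        = ∏ i ∈ Finset.Icc 1 j, (1 - (X : Polynomial ℤ) ^ (m - j + i)))
    (hgb0 : ∀ m j : ℕ, m < j → gb m j = 0)
    (c d a : ℕ) :
    ∑ p ∈ Finset.HasAntidiagonal.antidiagonal a,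
        X ^ ((c + 2) * p.2) * gb (c + p.1) p.1 * gb (d + p.2) p.2
      = gb (c + d + a + 2) a
        - X ^ (c + 1) * (if a = 0 then 0 else gb (c + d + a + 1) (a - 1)) := by
  have hB := gb_eq_Bq gb hgb hgb0
  simp only [hB]
  cases a with
  | zero => simp [Bq_zero]
  | succ a =>
    simp only [Nat.succ_ne_zero, if_false, Nat.add_sub_cancel]
    rw [Finset.Nat.sum_antidiagonal_succ']
    have step : ∀ p : ℕ × ℕ, p ∈ antidiagonal a →
        X^((c+2)*((p.1, p.2+1) : ℕ × ℕ).2) * Bq (c+((p.1, p.2+1) : ℕ × ℕ).1)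
            ((p.1, p.2+1) : ℕ × ℕ).1 * Bq (d+((p.1, p.2+1) : ℕ × ℕ).2)
            ((p.1, p.2+1) : ℕ × ℕ).2
          = X^((c+1)*(p.2+1)) * Bq (c+p.1) p.1 * Bq ((d+1)+(p.2+1)) (p.2+1)
            - X^(c+1) * (X^((c+1)*p.2) * Bq (c+p.1) p.1 * Bq ((d+1)+p.2) p.2) := by
      intro p _
      show X^((c+2)*(p.2+1)) * Bq (c+p.1) p.1 * Bq (d+(p.2+1)) (p.2+1) = _
      have hp2 := Bq_pascal2 d p.2
      rw [show d+(p.2+1) = d+p.2+1 from by ring,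
        show (d+1)+(p.2+1) = d+p.2+2 from by ring,
        show (d+1)+p.2 = d+p.2+1 from by ring,
        show (c+2)*(p.2+1) = ((c+1)*p.2 + (c+1)) + (p.2+1) from by ring,
        show (c+1)*(p.2+1) = (c+1)*p.2 + (c+1) from by ring,
        pow_add, pow_add]
      linear_combination (-(X^((c+1)*p.2) * X^(c+1) * Bq (c+p.1) p.1)) * hp2
    rw [Finset.sum_congr rfl step, Finset.sum_sub_distrib, ← Finset.mul_sum,
      Vlem c (d+1) a]
    have hV := Vlem c (d+1) (a+1)
    rw [Finset.Nat.sum_antidiagonal_succ'] at hV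
    have hV' : X ^ ((c + 1) * 0) * Bq (c + (a + 1)) (a + 1) * Bq ((d+1) + 0) 0
        + ∑ p ∈ antidiagonal a,
            X^((c+1)*(p.2+1)) * Bq (c+p.1) p.1 * Bq ((d+1)+(p.2+1)) (p.2+1)
        = Bq (c + (d+1) + (a+1) + 1) (a+1) := hV
    show X ^ ((c + 2) * 0) * Bq (c + (a + 1)) (a + 1) * Bq (d + 0) 0
        + (∑ p ∈ antidiagonal a,
            X^((c+1)*(p.2+1)) * Bq (c+p.1) p.1 * Bq ((d+1)+(p.2+1)) (p.2+1)
          - X^(c+1) * Bq (c + (d+1) + a + 1) a)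
        = Bq (c+d+(a+1)+2) (a+1) - X^(c+1) * Bq (c+d+(a+1)+1) a
    simp only [Nat.mul_zero, pow_zero, Bq_zero, one_mul, mul_one] at hV' ⊢
    rw [show c+d+(a+1)+2 = c+(d+1)+(a+1)+1 from by ring,
        show c+d+(a+1)+1 = c+(d+1)+a+1 from by ring]
    linear_combination hV'
end

section
/- For all integers n and k with 1 ≤ k ≤ n−1, the polynomial N₂(q) = (1−q^k)·(1−q^{n−k})·((1+q^n)(1+q³) − q(1+q)(q^k+q^{n−k}))·[n choose k]_q ∈ ℤ[q] is divisible in ℤ[q] by D₂(q) = (1−q)²(1−q²)², and the quotient polynomial P(q) = N₂(q)/D₂(q) has nonnegative coefficients. -/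
open Polynomial Finset

/-- Gaussian binomial coefficients via the Pascal recursion. -/
noncomputable def Gpoly : ℕ → ℕ → Polynomial ℤ
  | _, 0 => 1
  | 0, _ + 1 => 0
  | m + 1, j + 1 => Gpoly m j + X ^ (j + 1) * Gpoly m (j + 1)

lemma Gcongr {m m' j j' : ℕ} (hm : m = m') (hj : j = j') : Gpoly m j = Gpoly m' j' := by
  rw [hm, hj]

lemma Gpoly_zero_right (m : ℕ) : Gpoly m 0 = 1 := by cases m <;> rfl

lemma Gpoly_succ_succ (m j : ℕ) :
    Gpoly (m + 1) (j + 1) = Gpoly m j + X ^ (j + 1) * Gpoly m (j + 1) := rfl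

lemma Gpoly_eq_zero : ∀ m j : ℕ, m < j → Gpoly m j = 0 := by
  intro m
  induction m with
  | zero =>
    intro j h
    cases j with
    | zero => omega
    | succ j => rfl
  | succ m ih =>
    intro j h
    cases j with
    | zero => omega
    | succ j =>
      rw [Gpoly_succ_succ, ih j (by omega), ih (j + 1) (by omega)]
      ring

lemma Gpoly_diag : ∀ m : ℕ, Gpoly m m = 1 := by
  intro m
  induction m with
  | zero => rfl
  | succ m ih =>
    rw [Gpoly_succ_succ, ih, Gpoly_eq_zero m (m + 1) (by omega)]
    ring

lemma Gpoly_nonneg : ∀ m j i : ℕ, 0 ≤ (Gpoly m j).coeff i := by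
  intro m
  induction m with
  | zero =>
    intro j i
    cases j with
    | zero =>
      rw [Gpoly_zero_right, coeff_one]
      split <;> norm_num
    | succ j =>
      show 0 ≤ (0 : Polynomial ℤ).coeff i
      simp
  | succ m ih =>
    intro j i
    cases j with
    | zero =>
      rw [Gpoly_zero_right, coeff_one]
      split <;> norm_num
    | succ j =>
      rw [Gpoly_succ_succ, coeff_add]
      have h2 : 0 ≤ (X ^ (j + 1) * Gpoly m (j + 1)).coeff i := by
        rw [coeff_mul]
        apply Finset.sum_nonneg
        rintro ⟨u, v⟩ _
        have hu : 0 ≤ ((X : Polynomial ℤ) ^ (j + 1)).coeff u := by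
          rw [coeff_X_pow]; split <;> norm_num
        exact mul_nonneg hu (ih (j + 1) v)
      exact add_nonneg (ih j i) h2

/-- `Phi j m = ∏_{i<j} (1 - X^(m+1+i))`. -/
noncomputable def Phi (j m : ℕ) : Polynomial ℤ :=
  ∏ i ∈ Finset.range j, (1 - (X : Polynomial ℤ) ^ (m + 1 + i))

lemma Phi_zero (m : ℕ) : Phi 0 m = 1 := by simp [Phi]

lemma Phi_succ_top (j m : ℕ) : Phi (j + 1) m = Phi j m * (1 - X ^ (m + 1 + j)) := by
  rw [Phi, Phi, Finset.prod_range_succ]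

lemma Phi_succ_bot (j m : ℕ) : Phi (j + 1) m = (1 - X ^ (m + 1)) * Phi j (m + 1) := by
  rw [Phi, Finset.prod_range_succ']
  have h1 : m + 1 + 0 = m + 1 := by omega
  rw [h1, mul_comm]
  congr 1
  rw [Phi]
  apply Finset.prod_congr rfl
  intro i _
  have : m + 1 + (i + 1) = m + 1 + 1 + i := by omega
  rw [this]

lemma one_sub_X_pow_ne_zero (e : ℕ) (he : 1 ≤ e) : (1 - (X : Polynomial ℤ) ^ e) ≠ 0 := by
  intro h
  have := congrArg (fun p => Polynomial.coeff p e) h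
  simp only [coeff_sub, coeff_one, coeff_X_pow, if_pos rfl, coeff_zero] at this
  rw [if_neg (by omega)] at this
  norm_num at this

lemma Phi_ne_zero (j m : ℕ) : Phi j m ≠ 0 := by
  apply Finset.prod_ne_zero_iff.mpr
  intro i _
  exact one_sub_X_pow_ne_zero _ (by omega)

/-- Key product formula. -/
lemma Gpoly_key : ∀ m j : ℕ, Gpoly (m + j) j * Phi j 0 = Phi j m := by
  intro m
  induction m with
  | zero => intro j; rw [Nat.zero_add, Gpoly_diag, one_mul]
  | succ m ih =>
    intro j
    induction j with
    | zero => rw [Gpoly_zero_right, Phi_zero, Phi_zero, one_mul]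
    | succ j ihj =>
      have pascal : Gpoly (m + 1 + (j + 1)) (j + 1)
          = Gpoly (m + 1 + j) j + X ^ (j + 1) * Gpoly (m + 1 + j) (j + 1) := by
        have h : m + 1 + (j + 1) = (m + 1 + j) + 1 := by omega
        rw [h, Gpoly_succ_succ]
      have h2 : Gpoly (m + (j + 1)) (j + 1) * Phi (j + 1) 0 = Phi (j + 1) m := ih (j + 1)
      have hG : Gpoly (m + 1 + j) (j + 1) = Gpoly (m + (j + 1)) (j + 1) :=
        Gcongr (by omega) rfl
      rw [pascal, hG, Phi_succ_top j 0, Phi_succ_top j (m + 1)]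
      rw [Phi_succ_top j 0] at h2
      have hbot : Phi (j + 1) m = (1 - X ^ (m + 1)) * Phi j (m + 1) := Phi_succ_bot j m
      calc (Gpoly (m + 1 + j) j + X ^ (j + 1) * Gpoly (m + (j + 1)) (j + 1)) *
            (Phi j 0 * (1 - X ^ (0 + 1 + j)))
          = (1 - X ^ (0 + 1 + j)) * (Gpoly (m + 1 + j) j * Phi j 0)
            + X ^ (j + 1) *
              (Gpoly (m + (j + 1)) (j + 1) * (Phi j 0 * (1 - X ^ (0 + 1 + j)))) := by
            ring
        _ = (1 - X ^ (0 + 1 + j)) * Phi j (m + 1)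
            + X ^ (j + 1) * ((1 - X ^ (m + 1)) * Phi j (m + 1)) := by rw [ihj, h2, hbot]
        _ = Phi j (m + 1) * (1 - X ^ (m + 1 + 1 + j)) := by ring

/-- Column-removal identity, canonical form. -/
lemma Gpoly_L1 (m j : ℕ) :
    (1 - (X : Polynomial ℤ) ^ (j + 1)) * Gpoly (m + j + 1) (j + 1)
      = (1 - X ^ (m + j + 1)) * Gpoly (m + j) j := by
  apply mul_right_cancel₀ (Phi_ne_zero j 0)
  have h1 := Gpoly_key m (j + 1)
  have h2 := Gpoly_key m j
  rw [Phi_succ_top j 0, Phi_succ_top j m] at h1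
  have hG : Gpoly (m + (j + 1)) (j + 1) = Gpoly (m + j + 1) (j + 1) := Gcongr (by omega) rfl
  rw [hG] at h1
  calc (1 - (X : Polynomial ℤ) ^ (j + 1)) * Gpoly (m + j + 1) (j + 1) * Phi j 0
      = Gpoly (m + j + 1) (j + 1) * (Phi j 0 * (1 - X ^ (0 + 1 + j))) := by
        have h : (0 : ℕ) + 1 + j = j + 1 := by omega
        rw [h]; ring
    _ = Phi j m * (1 - X ^ (m + 1 + j)) := h1
    _ = (1 - X ^ (m + j + 1)) * (Gpoly (m + j) j * Phi j 0) := by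
        rw [h2]
        have h : m + 1 + j = m + j + 1 := by omega
        rw [h]; ring
    _ = (1 - X ^ (m + j + 1)) * Gpoly (m + j) j * Phi j 0 := by ring

/-- Row-removal identity, canonical form. -/
lemma Gpoly_L2 (m j : ℕ) :
    (1 - (X : Polynomial ℤ) ^ (m + 1)) * Gpoly (m + j + 1) j
      = (1 - X ^ (m + j + 1)) * Gpoly (m + j) j := by
  apply mul_right_cancel₀ (Phi_ne_zero j 0)
  have h1 := Gpoly_key (m + 1) j
  have h2 := Gpoly_key m j
  have hG : Gpoly (m + 1 + j) j = Gpoly (m + j + 1) j := Gcongr (by omega) rfl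
  rw [hG] at h1
  calc (1 - (X : Polynomial ℤ) ^ (m + 1)) * Gpoly (m + j + 1) j * Phi j 0
      = (1 - X ^ (m + 1)) * (Gpoly (m + j + 1) j * Phi j 0) := by ring
    _ = (1 - X ^ (m + 1)) * Phi j (m + 1) := by rw [h1]
    _ = Phi (j + 1) m := (Phi_succ_bot j m).symm
    _ = Phi j m * (1 - X ^ (m + 1 + j)) := Phi_succ_top j m
    _ = (1 - X ^ (m + j + 1)) * Gpoly (m + j) j * Phi j 0 := by
        rw [← h2]
        have h : m + 1 + j = m + j + 1 := by omega
        rw [h]; ring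

/-- `j = 2` product formula. -/
lemma Gpoly_two (m : ℕ) :
    Gpoly (m + 2) 2 * ((1 - (X : Polynomial ℤ)) * (1 - X ^ 2))
      = (1 - X ^ (m + 1)) * (1 - X ^ (m + 2)) := by
  have h := Gpoly_key m 2
  have e0 : Phi 2 0 = (1 - (X : Polynomial ℤ)) * (1 - X ^ 2) := by
    rw [show (2 : ℕ) = 1 + 1 from rfl, Phi_succ_top, Phi_succ_top, Phi_zero]
    norm_num
  have em : Phi 2 m = (1 - (X : Polynomial ℤ) ^ (m + 1)) * (1 - X ^ (m + 2)) := by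
    rw [show (2 : ℕ) = 1 + 1 from rfl, Phi_succ_top, Phi_succ_top, Phi_zero]
    have h1 : m + 1 + 0 = m + 1 := by omega
    have h2 : m + 1 + 1 = m + 2 := by omega
    rw [h1, h2, one_mul]
  rw [e0, em] at h
  exact h

/-- The two-step reduction identity. -/
lemma Gpoly_key1 (a' b' : ℕ) :
    (1 - (X : Polynomial ℤ) ^ (a' + 1)) * (1 - X ^ (b' + 1)) * Gpoly (a' + b' + 2) (a' + 1)
      = (1 - X ^ (a' + b' + 2)) * (1 - X ^ (a' + b' + 1)) * Gpoly (a' + b') a' := by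
  have h1 : (1 - (X : Polynomial ℤ) ^ (a' + 1)) * Gpoly (a' + b' + 2) (a' + 1)
      = (1 - X ^ (a' + b' + 2)) * Gpoly (a' + b' + 1) a' := by
    have h := Gpoly_L1 (b' + 1) a'
    rw [Gcongr (show b' + 1 + a' + 1 = a' + b' + 2 by omega) rfl,
        Gcongr (show b' + 1 + a' = a' + b' + 1 by omega) (rfl : a' = a'),
        show b' + 1 + a' + 1 = a' + b' + 2 by omega] at h
    exact h
  have h2 : (1 - (X : Polynomial ℤ) ^ (b' + 1)) * Gpoly (a' + b' + 1) a'
      = (1 - X ^ (a' + b' + 1)) * Gpoly (a' + b') a' := by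
    have h := Gpoly_L2 b' a'
    rw [Gcongr (show b' + a' + 1 = a' + b' + 1 by omega) (rfl : a' = a'),
        Gcongr (show b' + a' = a' + b' by omega) (rfl : a' = a'),
        show b' + a' + 1 = a' + b' + 1 by omega] at h
    exact h
  linear_combination (1 - (X : Polynomial ℤ) ^ (b' + 1)) * h1
    + (1 - (X : Polynomial ℤ) ^ (a' + b' + 2)) * h2

lemma prod_Icc_eq (f : ℕ → Polynomial ℤ) : ∀ j : ℕ,
    ∏ i ∈ Finset.Icc 1 j, f i = ∏ i ∈ Finset.range j, f (i + 1) := by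
  intro j
  induction j with
  | zero => simp
  | succ j ih =>
    rw [Finset.prod_Icc_succ_top (by omega), ih, Finset.prod_range_succ]

/-- Edge case `k = 1`. -/
lemma case_a0 (v : ℕ) :
    ∃ P : Polynomial ℤ,
      (1 - (X : Polynomial ℤ) ^ 1) * (1 - X ^ (v + 1))
          * ((1 + X ^ (v + 2)) * (1 + X ^ 3) - X * (1 + X) * (X ^ 1 + X ^ (v + 1)))
          * Gpoly (v + 2) 1
        = P * ((1 - (X : Polynomial ℤ)) ^ 2 * (1 - X ^ 2) ^ 2)
      ∧ ∀ i : ℕ, 0 ≤ P.coeff i := by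
  have key1 := Gpoly_key1 0 v
  rw [Gcongr (show 0 + v + 2 = v + 2 by omega) (rfl : (0:ℕ) + 1 = 0 + 1),
      Gcongr (show 0 + v = v by omega) (rfl : (0:ℕ) = 0)] at key1
  rw [Gcongr (rfl : v + 2 = v + 2) (show (0:ℕ) + 1 = 1 by omega)] at key1
  have hA2 := Gpoly_two 0
  rw [Gcongr (show 0 + 2 = 2 by omega) (rfl : (2:ℕ) = 2)] at hA2
  have hB2 := Gpoly_two v
  refine ⟨Gpoly 2 2 * Gpoly (v + 2) 2 * Gpoly (v + 2) 1
      + X ^ (v + 2) * (Gpoly (v + 2) 2 * Gpoly v 0), ?_, ?_⟩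
  · linear_combination
      (((1 + (X : Polynomial ℤ) ^ (v + 2)) * (1 + X ^ 3)
          - X * (1 + X) * (X ^ 1 + X ^ (v + 1)))
        - (1 - X ^ 2) * (1 - X ^ (v + 2))) * key1
      - ((1 - (X : Polynomial ℤ) ^ (v + 1)) * (1 - X ^ (v + 2)) * Gpoly (v + 2) 1) * hA2
      - (Gpoly 2 2 * ((1 - (X : Polynomial ℤ)) * (1 - X ^ 2)) * Gpoly (v + 2) 1
          + X ^ (v + 2) * ((1 - (X : Polynomial ℤ)) * (1 - X ^ 2)) * Gpoly v 0) * hB2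
  · intro i
    rw [coeff_add]
    refine add_nonneg ?_ ?_
    · rw [coeff_mul]
      apply Finset.sum_nonneg
      rintro ⟨u1, u2⟩ _
      refine mul_nonneg ?_ (Gpoly_nonneg _ _ _)
      rw [coeff_mul]
      apply Finset.sum_nonneg
      rintro ⟨w1, w2⟩ _
      exact mul_nonneg (Gpoly_nonneg _ _ _) (Gpoly_nonneg _ _ _)
    · rw [coeff_mul]
      apply Finset.sum_nonneg
      rintro ⟨u1, u2⟩ _
      refine mul_nonneg (by rw [coeff_X_pow]; split <;> norm_num) ?_
      rw [coeff_mul]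
      apply Finset.sum_nonneg
      rintro ⟨w1, w2⟩ _
      exact mul_nonneg (Gpoly_nonneg _ _ _) (Gpoly_nonneg _ _ _)

/-- Edge case `n - k = 1`. -/
lemma case_b0 (u : ℕ) :
    ∃ P : Polynomial ℤ,
      (1 - (X : Polynomial ℤ) ^ (u + 2)) * (1 - X ^ 1)
          * ((1 + X ^ (u + 3)) * (1 + X ^ 3) - X * (1 + X) * (X ^ (u + 2) + X ^ 1))
          * Gpoly (u + 3) (u + 2)
        = P * ((1 - (X : Polynomial ℤ)) ^ 2 * (1 - X ^ 2) ^ 2)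
      ∧ ∀ i : ℕ, 0 ≤ P.coeff i := by
  have key1 := Gpoly_key1 (u + 1) 0
  rw [Gcongr (show u + 1 + 0 + 2 = u + 3 by omega) (rfl : u + 1 + 1 = u + 1 + 1),
      Gcongr (show u + 1 + 0 = u + 1 by omega) (rfl : u + 1 = u + 1)] at key1
  rw [Gcongr (rfl : u + 3 = u + 3) (show u + 1 + 1 = u + 2 by omega)] at key1
  have hA2 := Gpoly_two (u + 1)
  rw [Gcongr (show u + 1 + 2 = u + 3 by omega) (rfl : (2:ℕ) = 2)] at hA2
  have hB2 := Gpoly_two 0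
  rw [Gcongr (show 0 + 2 = 2 by omega) (rfl : (2:ℕ) = 2)] at hB2
  refine ⟨Gpoly (u + 3) 2 * Gpoly 2 2 * Gpoly (u + 3) (u + 2)
      + X ^ (u + 3) * (Gpoly (u + 3) 2 * Gpoly (u + 1) (u + 1)), ?_, ?_⟩
  · linear_combination
      (((1 + (X : Polynomial ℤ) ^ (u + 3)) * (1 + X ^ 3)
          - X * (1 + X) * (X ^ (u + 2) + X ^ 1))
        - (1 - X ^ (u + 3)) * (1 - X ^ 2)) * key1
      - ((1 - (X : Polynomial ℤ) ^ 1) * (1 - X ^ 2) * Gpoly (u + 3) (u + 2)) * hA2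
      - (Gpoly (u + 3) 2 * ((1 - (X : Polynomial ℤ)) * (1 - X ^ 2)) * Gpoly (u + 3) (u + 2)) * hB2
      - (X ^ (u + 3) * ((1 - (X : Polynomial ℤ)) * (1 - X ^ 2)) * Gpoly (u + 1) (u + 1)) * hA2
  · intro i
    rw [coeff_add]
    refine add_nonneg ?_ ?_
    · rw [coeff_mul]
      apply Finset.sum_nonneg
      rintro ⟨u1, u2⟩ _
      refine mul_nonneg ?_ (Gpoly_nonneg _ _ _)
      rw [coeff_mul]
      apply Finset.sum_nonneg
      rintro ⟨w1, w2⟩ _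
      exact mul_nonneg (Gpoly_nonneg _ _ _) (Gpoly_nonneg _ _ _)
    · rw [coeff_mul]
      apply Finset.sum_nonneg
      rintro ⟨u1, u2⟩ _
      refine mul_nonneg (by rw [coeff_X_pow]; split <;> norm_num) ?_
      rw [coeff_mul]
      apply Finset.sum_nonneg
      rintro ⟨w1, w2⟩ _
      exact mul_nonneg (Gpoly_nonneg _ _ _) (Gpoly_nonneg _ _ _)

/-- Generic case `2 ≤ k`, `2 ≤ n - k`. -/
lemma case_gen (u v : ℕ) :
    ∃ P : Polynomial ℤ,
      (1 - (X : Polynomial ℤ) ^ (u + 2)) * (1 - X ^ (v + 2))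
          * ((1 + X ^ (u + v + 4)) * (1 + X ^ 3) - X * (1 + X) * (X ^ (u + 2) + X ^ (v + 2)))
          * Gpoly (u + v + 4) (u + 2)
        = P * ((1 - (X : Polynomial ℤ)) ^ 2 * (1 - X ^ 2) ^ 2)
      ∧ ∀ i : ℕ, 0 ≤ P.coeff i := by
  have key1 := Gpoly_key1 (u + 1) (v + 1)
  rw [Gcongr (show u + 1 + (v + 1) + 2 = u + v + 4 by omega) (show u + 1 + 1 = u + 2 by omega),
      Gcongr (show u + 1 + (v + 1) = u + v + 2 by omega) (rfl : u + 1 = u + 1)] at key1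
  have hA2 := Gpoly_two (u + 1)
  rw [Gcongr (show u + 1 + 2 = u + 3 by omega) (rfl : (2:ℕ) = 2)] at hA2
  have hB2 := Gpoly_two (v + 1)
  rw [Gcongr (show v + 1 + 2 = v + 3 by omega) (rfl : (2:ℕ) = 2)] at hB2
  have hN2 := Gpoly_two (u + v + 2)
  rw [Gcongr (show u + v + 2 + 2 = u + v + 4 by omega) (rfl : (2:ℕ) = 2)] at hN2
  have hM2 := Gpoly_two (u + v)
  have h7 : (1 - (X : Polynomial ℤ) ^ (v + 1)) * Gpoly (u + v + 2) (u + 1)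
      = (1 - X ^ (u + v + 2)) * Gpoly (u + v + 1) (u + 1) := by
    have h := Gpoly_L2 v (u + 1)
    rw [Gcongr (show v + (u + 1) + 1 = u + v + 2 by omega) (rfl : u + 1 = u + 1),
        Gcongr (show v + (u + 1) = u + v + 1 by omega) (rfl : u + 1 = u + 1),
        show v + (u + 1) + 1 = u + v + 2 by omega] at h
    exact h
  have h8 : (1 - (X : Polynomial ℤ) ^ (u + 1)) * Gpoly (u + v + 1) (u + 1)
      = (1 - X ^ (u + v + 1)) * Gpoly (u + v) u := by
    have h := Gpoly_L1 v u
    rw [Gcongr (show v + u + 1 = u + v + 1 by omega) (rfl : u + 1 = u + 1),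
        Gcongr (show v + u = u + v by omega) (rfl : u = u),
        show v + u + 1 = u + v + 1 by omega] at h
    exact h
  refine ⟨Gpoly (u + 3) 2 * Gpoly (v + 3) 2 * Gpoly (u + v + 4) (u + 2)
      + X ^ 3 * (Gpoly (u + v + 4) 2 * Gpoly (u + v + 2) 2 * Gpoly (u + v) u)
      + X ^ (u + v + 4) * (Gpoly (u + v + 4) 2 * Gpoly (u + v + 2) (u + 1)), ?_, ?_⟩
  · linear_combination
      (((1 + (X : Polynomial ℤ) ^ (u + v + 4)) * (1 + X ^ 3)
          - X * (1 + X) * (X ^ (u + 2) + X ^ (v + 2)))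
        - (1 - X ^ (u + 3)) * (1 - X ^ (v + 3))) * key1
      - ((1 - (X : Polynomial ℤ) ^ (v + 2)) * (1 - X ^ (v + 3))
          * Gpoly (u + v + 4) (u + 2)) * hA2
      - (Gpoly (u + 3) 2 * ((1 - (X : Polynomial ℤ)) * (1 - X ^ 2))
          * Gpoly (u + v + 4) (u + 2)) * hB2
      + (X ^ 3 * (1 - (X : Polynomial ℤ) ^ (u + 1)) * (1 - X ^ (u + v + 4))
          * (1 - X ^ (u + v + 3))) * h7
      + (X ^ 3 * (1 - (X : Polynomial ℤ) ^ (u + v + 4)) * (1 - X ^ (u + v + 3))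
          * (1 - X ^ (u + v + 2))) * h8
      - (X ^ 3 * (1 - (X : Polynomial ℤ) ^ (u + v + 2)) * (1 - X ^ (u + v + 1))
            * Gpoly (u + v) u
          + X ^ (u + v + 4) * ((1 - (X : Polynomial ℤ)) * (1 - X ^ 2))
            * Gpoly (u + v + 2) (u + 1)) * hN2
      - (X ^ 3 * Gpoly (u + v + 4) 2 * ((1 - (X : Polynomial ℤ)) * (1 - X ^ 2))
          * Gpoly (u + v) u) * hM2
  · intro i
    rw [coeff_add, coeff_add]
    have nn3 : ∀ p q r : Polynomial ℤ, (∀ a, 0 ≤ p.coeff a) → (∀ a, 0 ≤ q.coeff a) →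
        (∀ a, 0 ≤ r.coeff a) → 0 ≤ (p * q * r).coeff i := by
      intro p q r hp hq hr
      rw [coeff_mul]
      apply Finset.sum_nonneg
      rintro ⟨u1, u2⟩ _
      refine mul_nonneg ?_ (hr _)
      rw [coeff_mul]
      apply Finset.sum_nonneg
      rintro ⟨w1, w2⟩ _
      exact mul_nonneg (hp _) (hq _)
    have nnX : ∀ e : ℕ, ∀ a : ℕ, 0 ≤ ((X : Polynomial ℤ) ^ e).coeff a := by
      intro e a; rw [coeff_X_pow]; split <;> norm_num
    refine add_nonneg (add_nonneg ?_ ?_) ?_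
    · exact nn3 _ _ _ (Gpoly_nonneg _ _) (Gpoly_nonneg _ _) (Gpoly_nonneg _ _)
    · rw [coeff_mul]
      apply Finset.sum_nonneg
      rintro ⟨u1, u2⟩ _
      refine mul_nonneg (nnX _ _) ?_
      rw [coeff_mul]
      apply Finset.sum_nonneg
      rintro ⟨w1, w2⟩ _
      refine mul_nonneg ?_ (Gpoly_nonneg _ _ _)
      rw [coeff_mul]
      apply Finset.sum_nonneg
      rintro ⟨y1, y2⟩ _
      exact mul_nonneg (Gpoly_nonneg _ _ _) (Gpoly_nonneg _ _ _)
    · rw [coeff_mul]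
      apply Finset.sum_nonneg
      rintro ⟨u1, u2⟩ _
      refine mul_nonneg (nnX _ _) ?_
      rw [coeff_mul]
      apply Finset.sum_nonneg
      rintro ⟨w1, w2⟩ _
      exact mul_nonneg (Gpoly_nonneg _ _ _) (Gpoly_nonneg _ _ _)

/-- **Theorem 3.2 (degree 2), qualitative form.** For `1 ≤ k ≤ n−1`, the polynomial
`N₂(q) = (1−q^k)(1−q^{n−k})((1+q^n)(1+q³) − q(1+q)(q^k+q^{n−k}))·[n choose k]_q`
is divisible in `ℤ[q]` by `D₂(q) = (1−q)²(1−q²)²`, and the quotient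
(the Poincaré polynomial of `M̄₀,₀(G(k,n),2)`) has nonnegative coefficients.
Here `gb` is the Gaussian binomial coefficient characterized by the product formula. -/
theorem degree_two_poincare_polynomial
    (gb : ℕ → ℕ → Polynomial ℤ)
    (hgb : ∀ m j : ℕ, j ≤ m →
      gb m j * ∏ i ∈ Finset.Icc 1 j, (1 - (X : Polynomial ℤ) ^ i)
        = ∏ i ∈ Finset.Icc 1 j, (1 - (X : Polynomial ℤ) ^ (m - j + i)))
    (hgb0 : ∀ m j : ℕ, m < j → gb m j = 0)
    (n k : ℕ) (hk : 1 ≤ k) (hkn : k ≤ n - 1) :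
    ∃ P : Polynomial ℤ,
      (1 - (X : Polynomial ℤ) ^ k) * (1 - (X : Polynomial ℤ) ^ (n - k))
          * ((1 + X ^ n) * (1 + X ^ 3) - X * (1 + X) * (X ^ k + X ^ (n - k)))
          * gb n k
        = P * ((1 - (X : Polynomial ℤ)) ^ 2 * (1 - X ^ 2) ^ 2)
      ∧ ∀ i : ℕ, 0 ≤ P.coeff i := by
  -- gb agrees with Gpoly
  have gb_eq : ∀ m j : ℕ, j ≤ m → gb m j = Gpoly m j := by
    intro m j hjm
    obtain ⟨w, rfl⟩ : ∃ w, m = w + j := ⟨m - j, by omega⟩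
    apply mul_right_cancel₀ (Phi_ne_zero j 0)
    have h1 := hgb (w + j) j hjm
    have e1 : ∏ i ∈ Finset.Icc 1 j, (1 - (X : Polynomial ℤ) ^ i) = Phi j 0 := by
      rw [prod_Icc_eq, Phi]
      apply Finset.prod_congr rfl
      intro i _
      have : (0 : ℕ) + 1 + i = i + 1 := by omega
      rw [this]
    have e2 : ∏ i ∈ Finset.Icc 1 j, (1 - (X : Polynomial ℤ) ^ (w + j - j + i)) = Phi j w := by
      rw [prod_Icc_eq, Phi]
      apply Finset.prod_congr rfl
      intro i _
      have : w + 1 + i = w + j - j + (i + 1) := by omega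
      rw [this]
    rw [e1, e2] at h1
    rw [h1, Gpoly_key]
  obtain ⟨a', rfl⟩ : ∃ a', k = a' + 1 := ⟨k - 1, by omega⟩
  obtain ⟨b', rfl⟩ : ∃ b', n = a' + 1 + (b' + 1) := ⟨n - a' - 2, by omega⟩
  have hnk : a' + 1 + (b' + 1) - (a' + 1) = b' + 1 := by omega
  have hge := gb_eq (a' + 1 + (b' + 1)) (a' + 1) (by omega)
  rw [hnk, hge,
    Gcongr (show a' + 1 + (b' + 1) = a' + b' + 2 by omega) (rfl : a' + 1 = a' + 1)]
  by_cases ha : a' = 0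
  · subst ha
    rw [Gcongr (show 0 + b' + 2 = b' + 2 by omega) (show (0:ℕ) + 1 = 1 by omega)]
    obtain ⟨P, h1, h2⟩ := case_a0 b'
    exact ⟨P, by linear_combination h1, h2⟩
  · obtain ⟨u, rfl⟩ : ∃ u, a' = u + 1 := ⟨a' - 1, by omega⟩
    by_cases hb : b' = 0
    · subst hb
      rw [Gcongr (show u + 1 + 0 + 2 = u + 3 by omega) (show u + 1 + 1 = u + 2 by omega)]
      obtain ⟨P, h1, h2⟩ := case_b0 u
      exact ⟨P, by linear_combination h1, h2⟩
    · obtain ⟨v, rfl⟩ : ∃ v, b' = v + 1 := ⟨b' - 1, by omega⟩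
      rw [Gcongr (show u + 1 + (v + 1) + 2 = u + v + 4 by omega)
        (show u + 1 + 1 = u + 2 by omega)]
      obtain ⟨P, h1, h2⟩ := case_gen u v
      exact ⟨P, by linear_combination h1, h2⟩
end

section
/- For all integers n and k with 1 ≤ k ≤ n−1, let P(q) ∈ ℤ[q] be the quotient polynomial N₂(q)/D₂(q). Then 2·P(1) = C(n,k)·k·(n−k) + 2·C(n,k)·C(k(n−k)+1, 2), where C(a,b) denotes the ordinary binomial coefficient; that is, the Euler characteristic of the moduli stack of degree-2 genus-zero stable maps to G(k,n) equals the total number of torus-fixed points, namely (1/2)·C(n,k)·k·(n−k) fixed points with irreducible domain plus C(n,k)·C(k(n−k)+1, 2) fixed points with two-component domain. -/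
open Polynomial Finset

noncomputable def geomS (a : ℕ) : Polynomial ℤ := ∑ i ∈ Finset.range a, X ^ i

lemma geomS_mul (a : ℕ) : (1 - (X : Polynomial ℤ)) * geomS a = 1 - X ^ a := by
  have := geom_sum_mul (X : Polynomial ℤ) a
  unfold geomS; linear_combination -this

lemma geomS_eval_one (a : ℕ) : (geomS a).eval 1 = (a : ℤ) := by simp [geomS]

lemma one_sub_X_ne : (1 - (X : Polynomial ℤ)) ≠ 0 := by
  intro h
  have := congrArg (Polynomial.eval 0) h
  simp at this

lemma prod_Icc_add (m k : ℕ) :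
    ∏ i ∈ Finset.Icc 1 k, (m + i) = k.factorial * (m + k).choose k := by
  induction k with
  | zero => simp
  | succ k ih =>
    rw [Finset.prod_Icc_succ_top (by omega), ih]
    have h := Nat.add_one_mul_choose_eq (m + k) k
    have : (m + k + 1) * (m + k).choose k = (m + k + 1).choose (k + 1) * (k + 1) := by
      simpa [Nat.succ_eq_add_one] using h
    rw [Nat.factorial_succ]
    calc k.factorial * (m + k).choose k * (m + (k + 1))
        = k.factorial * ((m + k + 1) * (m + k).choose k) := by ring
      _ = k.factorial * ((m + k + 1).choose (k + 1) * (k + 1)) := by rw [this]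
      _ = (k + 1) * k.factorial * (m + (k + 1)).choose (k + 1) := by ring_nf

/-- **Euler characteristic of `M̄₀,₀(G(k,n),2)` = number of torus-fixed points.**
For `1 ≤ k ≤ n−1`, if `P` is the quotient polynomial `N₂(q)/D₂(q)` (the Poincaré
polynomial of the moduli stack), then
`2·P(1) = C(n,k)·k·(n−k) + 2·C(n,k)·C(k(n−k)+1, 2)`, i.e. the Euler characteristic
`P(1)` equals `(1/2)C(n,k)k(n−k)` fixed points with irreducible domain plus
`C(n,k)·C(k(n−k)+1,2)` fixed points with two-component domain.
Here `gb` is the Gaussian binomial coefficient characterized by the product formula. -/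
theorem degree_two_euler_characteristic
    (gb : ℕ → ℕ → Polynomial ℤ)
    (hgb : ∀ m j : ℕ, j ≤ m →
      gb m j * ∏ i ∈ Finset.Icc 1 j, (1 - (X : Polynomial ℤ) ^ i)
        = ∏ i ∈ Finset.Icc 1 j, (1 - (X : Polynomial ℤ) ^ (m - j + i)))
    (hgb0 : ∀ m j : ℕ, m < j → gb m j = 0)
    (n k : ℕ) (hk : 1 ≤ k) (hkn : k ≤ n - 1)
    (P : Polynomial ℤ)
    (hP : (1 - (X : Polynomial ℤ) ^ k) * (1 - (X : Polynomial ℤ) ^ (n - k))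
          * ((1 + X ^ n) * (1 + X ^ 3) - X * (1 + X) * (X ^ k + X ^ (n - k)))
          * gb n k
        = P * ((1 - (X : Polynomial ℤ)) ^ 2 * (1 - X ^ 2) ^ 2)) :
    2 * P.eval 1
      = (n.choose k * (k * (n - k))
          + 2 * n.choose k * Nat.choose (k * (n - k) + 1) 2 : ℤ) := by

  set m := n - k with hm
  have hkm : k + m = n := by omega
  have hkn' : k ≤ n := by omega
  -- Step 1: gb n k evaluated at 1 is the binomial coefficient
  have hgbe : (gb n k).eval 1 = (n.choose k : ℤ) := by
    have h := hgb n k hkn'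
    have hL : ∏ i ∈ Finset.Icc 1 k, (1 - (X : Polynomial ℤ) ^ i)
        = (1 - X) ^ k * ∏ i ∈ Finset.Icc 1 k, geomS i := by
      rw [Finset.prod_congr rfl (fun i _ => (geomS_mul i).symm),
        Finset.prod_mul_distrib, Finset.prod_const, Nat.card_Icc]
      norm_num
    have hR : ∏ i ∈ Finset.Icc 1 k, (1 - (X : Polynomial ℤ) ^ (n - k + i))
        = (1 - X) ^ k * ∏ i ∈ Finset.Icc 1 k, geomS (n - k + i) := by
      rw [Finset.prod_congr rfl (fun i _ => (geomS_mul (n - k + i)).symm),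
        Finset.prod_mul_distrib, Finset.prod_const, Nat.card_Icc]
      norm_num
    rw [hL, hR] at h
    have hcan : gb n k * ∏ i ∈ Finset.Icc 1 k, geomS i
        = ∏ i ∈ Finset.Icc 1 k, geomS (n - k + i) := by
      have hne : ((1 - X : Polynomial ℤ)) ^ k ≠ 0 := pow_ne_zero _ one_sub_X_ne
      apply mul_left_cancel₀ hne
      linear_combination h
    have he := congrArg (Polynomial.eval 1) hcan
    simp only [eval_mul, eval_prod, geomS_eval_one] at he
    have e1 : ∏ i ∈ Finset.Icc 1 k, (i : ℤ) = (k.factorial : ℤ) := by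
      rw [← Nat.cast_prod]
      norm_cast
      simpa using prod_Icc_add 0 k
    have e2 : ∏ i ∈ Finset.Icc 1 k, ((n - k + i : ℕ) : ℤ)
        = (k.factorial : ℤ) * (n.choose k : ℤ) := by
      rw [← Nat.cast_prod, prod_Icc_add m k, Nat.add_comm m k, hkm]
      push_cast
      ring
    rw [e1, e2] at he
    have hfne : (k.factorial : ℤ) ≠ 0 := by positivity
    exact mul_right_cancel₀ hfne (he.trans (mul_comm _ _))
  -- Step 2: cancel (1-X)^4 from hP
  have hXk : (X : Polynomial ℤ) ^ k = 1 - (1 - X) * geomS k := by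
    linear_combination geomS_mul k
  have hXm : (X : Polynomial ℤ) ^ m = 1 - (1 - X) * geomS m := by
    linear_combination geomS_mul m
  have hXn : (X : Polynomial ℤ) ^ n = X ^ k * X ^ m := by
    rw [← pow_add, hkm]
  have hX2 : (1 - (X : Polynomial ℤ) ^ 2) = (1 - X) * (1 + X) := by ring
  have key : geomS k * geomS m * ((1 + X) * ((1 + X ^ n) + X * geomS k * geomS m)) * gb n k
      = P * (1 + X) ^ 2 := by
    have hne : ((1 - X : Polynomial ℤ)) ^ 4 ≠ 0 := pow_ne_zero _ one_sub_X_ne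
    apply mul_left_cancel₀ hne
    calc (1 - X) ^ 4 * (geomS k * geomS m
            * ((1 + X) * ((1 + X ^ n) + X * geomS k * geomS m)) * gb n k)
        = (1 - X ^ k) * (1 - X ^ m)
          * ((1 + X ^ n) * (1 + X ^ 3) - X * (1 + X) * (X ^ k + X ^ m)) * gb n k := by
          rw [hXn, hXk, hXm]; ring
      _ = P * ((1 - X) ^ 2 * (1 - X ^ 2) ^ 2) := hP
      _ = (1 - X) ^ 4 * (P * (1 + X) ^ 2) := by rw [hX2]; ring
  have he := congrArg (Polynomial.eval 1) key
  simp only [eval_mul, eval_add, eval_sub, eval_one, eval_pow, eval_X, geomS_eval_one,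
    hgbe, hXn, one_pow, mul_one, one_mul] at he
  -- he : ↑k * ↑m * ((1+1) * ((1+1) + ↑k * ↑m)) * ↑choose = eval 1 P * (1+1)^2
  obtain ⟨c, hc⟩ := Nat.even_mul_succ_self (k * m)
  have h1 : (k * m + 1) * (k * m + 1 - 1) = 2 * c := by
    rw [Nat.add_sub_cancel, Nat.mul_comm (k * m + 1) (k * m), hc]
    omega
  have hch2 : 2 * ((k * m + 1).choose 2) = (k * m + 1) * (k * m) := by
    rw [Nat.choose_two_right, h1, Nat.mul_div_cancel_left c (by norm_num),
      Nat.mul_comm (k * m + 1) (k * m), hc]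
    omega
  have hch2' : (2 : ℤ) * (((k * m + 1).choose 2 : ℕ) : ℤ)
      = ((k : ℤ) * m + 1) * ((k : ℤ) * m) := by
    exact_mod_cast hch2
  have hmz : ((m : ℤ)) = (n : ℤ) - (k : ℤ) := by rw [hm]; omega
  push_cast
  have h2 : (2 : ℤ) * (2 * P.eval 1)
      = 2 * ((n.choose k : ℤ) * ((k : ℤ) * ((n : ℤ) - k))
          + 2 * (n.choose k : ℤ) * (((k * m + 1).choose 2 : ℕ) : ℤ)) := by
    linear_combination (-1 : ℤ) * he - 2 * (n.choose k : ℤ) * hch2'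
      + 2 * (n.choose k : ℤ) * (k : ℤ) * hmz
  have h3 := mul_left_cancel₀ (by norm_num : (2 : ℤ) ≠ 0) h2
  linear_combination h3
end
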